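/- Exponential decay of the Lyapunov function: Let k₃ > 0 and k₄ > 0 be real numbers and let e₃, e₄ : ℝ → ℝ be differentiable functions satisfying e₃'(t) = e₄(t) − k₃·e₃(t) and e₄'(t) = −e₃(t) − k₄·e₄(t) for all t. Then for all t ≥ 0, e₃(t)² + e₄(t)² ≤ (e₃(0)² + e₄(0)²)·exp(−2·min(k₃,k₄)·t). -/

import Mathlib

/-- Exponential decay of the Lyapunov function: along the closed-loop error system
`ė₃ = e₄ − k₃e₃`, `ė₄ = −e₃ − k₄e₄` with `k₃, k₄ > 0`, for all `t ≥ 0`,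
`e₃(t)² + e₄(t)² ≤ (e₃(0)² + e₄(0)²)·exp(−2·min(k₃,k₄)·t)`. -/
theorem lyapunov_exponential_decay (k₃ k₄ : ℝ) (hk₃ : 0 < k₃) (hk₄ : 0 < k₄)
    (e₃ e₄ : ℝ → ℝ)
    (he₃ : Differentiable ℝ e₃) (he₄ : Differentiable ℝ e₄)
    (hd₃ : ∀ t, deriv e₃ t = e₄ t - k₃ * e₃ t)
    (hd₄ : ∀ t, deriv e₄ t = -e₃ t - k₄ * e₄ t) :
    ∀ t : ℝ, 0 ≤ t →
      e₃ t ^ 2 + e₄ t ^ 2 ≤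
        (e₃ 0 ^ 2 + e₄ 0 ^ 2) * Real.exp (-2 * min k₃ k₄ * t) := by
  set m := min k₃ k₄ with hm
  set g : ℝ → ℝ := fun t => (e₃ t ^ 2 + e₄ t ^ 2) * Real.exp (2 * m * t) with hg
  have hder : ∀ t, HasDerivAt g
      ((2 * (m - k₃) * e₃ t ^ 2 + 2 * (m - k₄) * e₄ t ^ 2) * Real.exp (2 * m * t)) t := by
    intro t
    have h3 : HasDerivAt e₃ (e₄ t - k₃ * e₃ t) t := by
      have := (he₃ t).hasDerivAt; rwa [hd₃ t] at this
    have h4 : HasDerivAt e₄ (-e₃ t - k₄ * e₄ t) t := by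
      have := (he₄ t).hasDerivAt; rwa [hd₄ t] at this
    have hV : HasDerivAt (fun t => e₃ t ^ 2 + e₄ t ^ 2)
        (2 * e₃ t * (e₄ t - k₃ * e₃ t) + 2 * e₄ t * (-e₃ t - k₄ * e₄ t)) t := by
      have := ((h3.fun_pow 2).add (h4.fun_pow 2))
      refine this.congr_deriv ?_
      ring
    have hE : HasDerivAt (fun t => Real.exp (2 * m * t)) (2 * m * Real.exp (2 * m * t)) t := by
      have h1 : HasDerivAt (fun t : ℝ => 2 * m * t) (2 * m) t := by
        simpa using (hasDerivAt_id t).const_mul (2 * m)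
      simpa [mul_comm] using h1.exp
    have := hV.fun_mul hE
    refine this.congr_deriv ?_
    ring
  have hderiv_nonpos : ∀ t, deriv g t ≤ 0 := by
    intro t
    rw [(hder t).deriv]
    have h1 : m - k₃ ≤ 0 := by simp [hm, min_le_left]
    have h2 : m - k₄ ≤ 0 := by simp [hm, min_le_right]
    have hsum : 2 * (m - k₃) * e₃ t ^ 2 + 2 * (m - k₄) * e₄ t ^ 2 ≤ 0 := by
      have := mul_nonpos_of_nonpos_of_nonneg (by linarith : 2 * (m - k₃) ≤ 0) (sq_nonneg (e₃ t))
      have := mul_nonpos_of_nonpos_of_nonneg (by linarith : 2 * (m - k₄) ≤ 0) (sq_nonneg (e₄ t))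
      nlinarith [sq_nonneg (e₃ t), sq_nonneg (e₄ t)]
    exact mul_nonpos_of_nonpos_of_nonneg hsum (Real.exp_pos _).le
  have hgdiff : Differentiable ℝ g := fun t => (hder t).differentiableAt
  have hanti : Antitone g := antitone_of_deriv_nonpos hgdiff hderiv_nonpos
  intro t ht
  have := hanti ht
  have hgt : (e₃ t ^ 2 + e₄ t ^ 2) * Real.exp (2 * m * t) ≤ e₃ 0 ^ 2 + e₄ 0 ^ 2 := by
    simpa [hg] using this
  have hexp : (0:ℝ) < Real.exp (2 * m * t) := Real.exp_pos _
  rw [show (-2 * m * t) = -(2 * m * t) by ring, Real.exp_neg]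
  calc (e₃ t ^ 2 + e₄ t ^ 2) ≤ (e₃ 0 ^ 2 + e₄ 0 ^ 2) / Real.exp (2 * m * t) := by
        rw [le_div_iff₀ hexp]; exact hgt
    _ = (e₃ 0 ^ 2 + e₄ 0 ^ 2) * (Real.exp (2 * m * t))⁻¹ := by ring
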